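/- Let N be the 8×120 matrix whose columns are the positive roots of the root system E₈ (each root has squared norm 2). Then A = NᵀN − 2I is a symmetric 120×120 matrix with zero diagonal and entries in {0,1,−1}, and its eigenvalues are 28 with multiplicity 8 and −2 with multiplicity 112. -/

import Mathlib

open Matrix Finset
/-- Membership in the root system `E₈`: the `112` roots `±eᵢ ± eⱼ` (`i < j`), which are exactly
the vectors with entries in `{0, 1, -1}` of squared norm `2`, together with the `128` roots
`½ Σ ± eᵢ` with an even number of positive summands, i.e. the vectors with all entries `±½`
whose coordinate sum is an even integer. -/
def IsE8Root (v : Fin 8 → ℝ) : Prop :=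
  ((∀ i, v i ∈ ({0, 1, -1} : Set ℝ)) ∧ v ⬝ᵥ v = 2) ∨
  ((∀ i, v i ∈ ({1 / 2, -1 / 2} : Set ℝ)) ∧ ∃ m : ℤ, (∑ i, v i) = 2 * m)
abbrev E8Code := (Fin 8 × Fin 8 × Bool × Bool) ⊕ (Fin 8 → Bool)
def vZ : E8Code → (Fin 8 → ℤ)
  | .inl p => fun k => (if k = p.1 then (if p.2.2.1 then 2 else -2) else 0) +
           (if k = p.2.1 then (if p.2.2.2 then 2 else -2) else 0)
  | .inr b => fun k => if b k then 1 else -1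
noncomputable def vec (c : E8Code) : Fin 8 → ℝ := fun k => (vZ c k : ℝ) / 2
def ok : E8Code → Prop
  | .inl p => p.1 < p.2.1
  | .inr b => (Finset.univ.filter (fun i => b i)).card % 2 = 0
instance : DecidablePred ok := fun c => by cases c <;> (unfold ok; infer_instance)
def KF : Finset E8Code := Finset.univ.filter ok
lemma vec_inl (p : Fin 8 × Fin 8 × Bool × Bool) (k : Fin 8) :
    _root_.vec (.inl p) k = (if k = p.1 then (if p.2.2.1 then (1:ℝ) else -1) else 0) +
      (if k = p.2.1 then (if p.2.2.2 then (1:ℝ) else -1) else 0) := by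
  simp only [_root_.vec, vZ]; push_cast; split_ifs <;> ring
lemma vec_inr (b : Fin 8 → Bool) (k : Fin 8) :
    _root_.vec (.inr b) k = if b k then (1/2 : ℝ) else -(1/2) := by
  simp only [_root_.vec, vZ]; split_ifs <;> norm_num

lemma half_sum (x : Fin 8 → ℝ) (hx : ∀ i, x i ∈ ({1 / 2, -1 / 2} : Set ℝ)) :
    ∀ t : Finset (Fin 8), ∑ i ∈ t, x i =
      (t.filter (fun i => x i = 1/2)).card - (1/2 : ℝ) * t.card := by
  intro t
  induction t using Finset.induction_on with
  | empty => simp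
  | @insert a s ha ih =>
    rw [Finset.sum_insert ha, Finset.filter_insert, ih,
      Finset.card_insert_of_notMem ha]
    rcases hx a with h1 | h1
    · rw [if_pos h1, Finset.card_insert_of_notMem (fun h => ha (Finset.mem_of_mem_filter a h)),
        h1]
      push_cast; ring
    · simp only [Set.mem_singleton_iff] at h1
      rw [if_neg (by rw [h1]; norm_num), h1]
      push_cast; ring

lemma isRoot_vec (c : E8Code) (hc : c ∈ KF) : IsE8Root (_root_.vec c) := by
  simp only [KF, Finset.mem_filter] at hc
  obtain ⟨-, hok⟩ := hc
  cases c with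
  | inl p =>
    obtain ⟨i, j, s, t⟩ := p
    have hij : i ≠ j := ne_of_lt hok
    left
    constructor
    · intro k
      rw [vec_inl]
      simp only [Set.mem_insert_iff, Set.mem_singleton_iff]
      by_cases h1 : k = i <;> by_cases h2 : k = j <;> cases s <;> cases t <;>
        simp [h1, h2, hij] <;> tauto
    · have key : ∀ k, _root_.vec (.inl (i,j,s,t)) k * _root_.vec (.inl (i,j,s,t)) k =
          (if k = i then (1:ℝ) else 0) + (if k = j then 1 else 0) := by
        intro k
        rw [vec_inl]
        by_cases h1 : k = i <;> by_cases h2 : k = j <;> cases s <;> cases t <;>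
          simp [h1, h2, hij, Ne.symm hij] <;> first | ring | (exfalso; exact hij (h1 ▸ h2 ▸ rfl))
      simp only [dotProduct]
      rw [Finset.sum_congr rfl (fun k _ => key k), Finset.sum_add_distrib]
      simp [Finset.sum_ite_eq']
      norm_num
  | inr b =>
    right
    constructor
    · intro k
      rw [vec_inr]
      simp only [Set.mem_insert_iff, Set.mem_singleton_iff]
      cases h : b k <;> norm_num
    · -- sum = (#true) - 4, even
      have hx : ∀ i, _root_.vec (.inr b) i ∈ ({1 / 2, -1 / 2} : Set ℝ) := by
        intro k; rw [vec_inr]; cases h : b k <;> norm_num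
      have hs := half_sum _ hx Finset.univ
      have hfil : Finset.univ.filter (fun i => _root_.vec (.inr b) i = 1/2) =
          Finset.univ.filter (fun i => b i) := by
        apply Finset.filter_congr
        intro k _
        rw [vec_inr]
        cases h : b k <;> norm_num
      rw [hfil] at hs
      obtain ⟨a, ha⟩ := (Nat.even_iff.mpr hok).exists_two_nsmul _
      refine ⟨(a : ℤ) - 2, ?_⟩
      rw [hs]
      simp only [ha, Finset.card_univ, Fintype.card_fin, smul_eq_mul]
      push_cast
      ring

lemma isRoot_neg {v : Fin 8 → ℝ} (hv : IsE8Root v) : IsE8Root (-v) := by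
  rcases hv with ⟨h1, h2⟩ | ⟨h1, m, h2⟩
  · left
    refine ⟨fun i => ?_, ?_⟩
    · have := h1 i
      simp only [Set.mem_insert_iff, Set.mem_singleton_iff] at this ⊢
      rcases this with h | h | h <;> simp [Pi.neg_apply, h]
    · simpa [dotProduct, neg_mul_neg] using h2
  · right
    refine ⟨fun i => ?_, ⟨-m, ?_⟩⟩
    · have := h1 i
      simp only [Set.mem_insert_iff, Set.mem_singleton_iff] at this ⊢
      rcases this with h | h <;> rw [Pi.neg_apply, h] <;> norm_num
    · simp only [Pi.neg_apply, Finset.sum_neg_distrib, h2]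
      push_cast; ring

lemma root_norm {v : Fin 8 → ℝ} (hv : IsE8Root v) : v ⬝ᵥ v = 2 := by
  rcases hv with ⟨-, h2⟩ | ⟨h1, -⟩
  · exact h2
  · have : ∀ i, v i * v i = 1/4 := by
      intro i; rcases h1 i with h | h <;> rw [h] <;> norm_num
    simp only [dotProduct]
    rw [Finset.sum_congr rfl (fun i _ => this i)]
    simp; norm_num

/-- A type-1 root has support exactly two coordinates. -/
lemma support_two (x : Fin 8 → ℝ) (hx : ∀ i, x i ∈ ({0, 1, -1} : Set ℝ)) (hd : x ⬝ᵥ x = 2) :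
    ∃ a b : Fin 8, a < b ∧ (x a = 1 ∨ x a = -1) ∧ (x b = 1 ∨ x b = -1) ∧
      ∀ k, k ≠ a → k ≠ b → x k = 0 := by
  classical
  replace hx : ∀ i, x i = 0 ∨ x i = 1 ∨ x i = -1 := fun i => by
    simpa [Set.mem_insert_iff, Set.mem_singleton_iff] using hx i
  set s := Finset.univ.filter (fun i => x i ≠ 0) with hs
  have hcard : s.card = 2 := by
    have key : ∀ i, x i * x i = if x i ≠ 0 then (1:ℝ) else 0 := by
      intro i; rcases hx i with h | h | h <;> rw [h] <;> norm_num
    have : (s.card : ℝ) = 2 := by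
      rw [← hd]
      simp only [dotProduct]
      rw [Finset.sum_congr rfl (fun i _ => key i), Finset.sum_boole]
    exact_mod_cast this
  obtain ⟨a, b, hab, hsab⟩ := Finset.card_eq_two.mp hcard
  have hmem : ∀ k, x k ≠ 0 ↔ (k = a ∨ k = b) := by
    intro k
    constructor
    · intro h
      have : k ∈ s := Finset.mem_filter.mpr ⟨Finset.mem_univ _, h⟩
      rw [hsab] at this
      simpa using this
    · intro h
      have : k ∈ s := by rw [hsab]; simpa using h
      exact (Finset.mem_filter.mp this).2
  have hxa : x a ≠ 0 := (hmem a).mpr (Or.inl rfl)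
  have hxb : x b ≠ 0 := (hmem b).mpr (Or.inr rfl)
  have hva : x a = 1 ∨ x a = -1 := by rcases hx a with h | h | h <;> tauto
  have hvb : x b = 1 ∨ x b = -1 := by rcases hx b with h | h | h <;> tauto
  have hz : ∀ k, k ≠ a → k ≠ b → x k = 0 := by
    intro k h1 h2
    by_contra h
    rcases (hmem k).mp h with h | h <;> tauto
  rcases lt_or_gt_of_ne hab with h | h
  · exact ⟨a, b, h, hva, hvb, hz⟩
  · exact ⟨b, a, h, hvb, hva, fun k h1 h2 => hz k h2 h1⟩

lemma root_dot_int {x y : Fin 8 → ℝ} (hx : IsE8Root x) (hy : IsE8Root y) :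
    ∃ k : ℤ, x ⬝ᵥ y = k := by
  classical
  -- helper for the mixed case
  have mixed : ∀ x y : Fin 8 → ℝ, (∀ i, x i ∈ ({0, 1, -1} : Set ℝ)) → x ⬝ᵥ x = 2 →
      (∀ i, y i ∈ ({1 / 2, -1 / 2} : Set ℝ)) → ∃ k : ℤ, x ⬝ᵥ y = k := by
    intro x y hx1 hx2 hy1
    replace hy1 : ∀ i, y i = 1/2 ∨ y i = -(1/2) := fun i => by
      have := hy1 i
      simp only [Set.mem_insert_iff, Set.mem_singleton_iff] at this
      rcases this with h | h <;> [left; right] <;> rw [h] <;> norm_num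
    obtain ⟨a, b, hab, hva, hvb, hz⟩ := support_two x hx1 hx2
    have hsum : x ⬝ᵥ y = x a * y a + x b * y b := by
      simp only [dotProduct]
      rw [← Finset.sum_subset (Finset.subset_univ {a, b})
        (fun k _ hk => by
          simp only [Finset.mem_insert, Finset.mem_singleton] at hk
          push_neg at hk
          rw [hz k hk.1 hk.2, zero_mul])]
      rw [Finset.sum_pair (ne_of_lt hab)]
    have ha : x a * y a = 1/2 ∨ x a * y a = -(1/2) := by
      rcases hva with h | h <;> rcases hy1 a with h' | h' <;> rw [h, h'] <;> norm_num
    have hb : x b * y b = 1/2 ∨ x b * y b = -(1/2) := by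
      rcases hvb with h | h <;> rcases hy1 b with h' | h' <;> rw [h, h'] <;> norm_num
    rw [hsum]
    rcases ha with h | h <;> rcases hb with h' | h' <;> rw [h, h']
    · exact ⟨1, by norm_num⟩
    · exact ⟨0, by norm_num⟩
    · exact ⟨0, by norm_num⟩
    · exact ⟨-1, by norm_num⟩
  rcases hx with ⟨hx1, hx2⟩ | ⟨hx1, mx, hx2⟩ <;> rcases hy with ⟨hy1, hy2⟩ | ⟨hy1, my, hy2⟩
  · -- both type 1 : all products are integers
    have : ∀ i, ∃ k : ℤ, x i * y i = k := by
      intro i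
      have ha := hx1 i
      have hb := hy1 i
      simp only [Set.mem_insert_iff, Set.mem_singleton_iff] at ha hb
      rcases ha with h | h | h <;> rcases hb with h' | h' | h' <;> rw [h, h']
      · exact ⟨0, by norm_num⟩
      · exact ⟨0, by norm_num⟩
      · exact ⟨0, by norm_num⟩
      · exact ⟨0, by norm_num⟩
      · exact ⟨1, by norm_num⟩
      · exact ⟨-1, by norm_num⟩
      · exact ⟨0, by norm_num⟩
      · exact ⟨-1, by norm_num⟩
      · exact ⟨1, by norm_num⟩
    choose f hf using this
    exact ⟨∑ i, f i, by simp only [dotProduct]; rw [Finset.sum_congr rfl (fun i _ => hf i)]; push_cast; ring⟩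
  · exact mixed x y hx1 hx2 hy1
  · obtain ⟨k, hk⟩ := mixed y x hy1 hy2 hx1
    exact ⟨k, by rwa [dotProduct_comm]⟩
  · -- both type 2
    set c := fun i => x i + y i with hc
    have hcc : ∀ i, c i = 0 ∨ c i = 1 ∨ c i = -1 := by
      intro i
      have ha := hx1 i
      have hb := hy1 i
      simp only [Set.mem_insert_iff, Set.mem_singleton_iff] at ha hb
      rcases ha with h | h <;> rcases hb with h' | h' <;>
        simp only [hc, h, h'] <;> norm_num
    set P := Finset.univ.filter (fun i => c i = 1) with hP
    set M := Finset.univ.filter (fun i => c i = -1) with hM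
    have h1 : ∑ i, c i = (P.card : ℝ) - M.card := by
      have key : ∀ i, c i = (if c i = 1 then (1:ℝ) else 0) - (if c i = -1 then (1:ℝ) else 0) := by
        intro i; rcases hcc i with h | h | h <;> rw [h] <;> norm_num
      rw [Finset.sum_congr rfl (fun i _ => key i), Finset.sum_sub_distrib,
        Finset.sum_boole, Finset.sum_boole]
    have h2 : ∑ i, c i * c i = (P.card : ℝ) + M.card := by
      have key : ∀ i, c i * c i =
          (if c i = 1 then (1:ℝ) else 0) + (if c i = -1 then (1:ℝ) else 0) := by
        intro i; rcases hcc i with h | h | h <;> rw [h] <;> norm_num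
      rw [Finset.sum_congr rfl (fun i _ => key i), Finset.sum_add_distrib,
        Finset.sum_boole, Finset.sum_boole]
    have hxx : x ⬝ᵥ x = 2 := root_norm (Or.inr ⟨hx1, mx, hx2⟩)
    have hyy : y ⬝ᵥ y = 2 := root_norm (Or.inr ⟨hy1, my, hy2⟩)
    have hexp : ∑ i, c i * c i = x ⬝ᵥ x + 2 * (x ⬝ᵥ y) + y ⬝ᵥ y := by
      simp only [hc, dotProduct, Finset.mul_sum, ← Finset.sum_add_distrib]
      exact Finset.sum_congr rfl (fun i _ => by ring)
    have hsum : ∑ i, c i = 2 * mx + 2 * my := by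
      simp only [hc, Finset.sum_add_distrib, hx2, hy2]
    refine ⟨(M.card : ℤ) + mx + my - 2, ?_⟩
    have := h1
    rw [hsum] at this
    have h4 : (P.card : ℝ) = M.card + 2 * mx + 2 * my := by linarith
    rw [hexp, hxx, hyy] at h2
    push_cast
    linarith

lemma root_mem (v : Fin 8 → ℝ) (hv : IsE8Root v) : ∃ c ∈ KF, _root_.vec c = v := by
  classical
  rcases hv with ⟨h1, h2⟩ | ⟨h1, m, h2⟩
  · obtain ⟨a, b, hab, hva, hvb, hz⟩ := support_two v h1 h2
    refine ⟨.inl (a, b, if v a = 1 then true else false, if v b = 1 then true else false),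
      Finset.mem_filter.mpr ⟨Finset.mem_univ _, hab⟩, ?_⟩
    funext k
    rw [vec_inl]
    by_cases hka : k = a
    · subst hka
      rw [if_pos rfl, if_neg (ne_of_lt hab), add_zero]
      rcases hva with h | h <;> rw [h] <;> norm_num
    · by_cases hkb : k = b
      · subst hkb
        rw [if_neg (ne_of_gt hab), if_pos rfl, zero_add]
        rcases hvb with h | h <;> rw [h] <;> norm_num
      · rw [if_neg hka, if_neg hkb, add_zero, hz k hka hkb]
  · replace h1 : ∀ i, v i = 1/2 ∨ v i = -(1/2) := fun i => by
      have := h1 i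
      simp only [Set.mem_insert_iff, Set.mem_singleton_iff] at this
      rcases this with h | h <;> [left; right] <;> rw [h] <;> norm_num
    set b : Fin 8 → Bool := fun i => if v i = 1/2 then true else false with hb
    have hbv : ∀ k, v k = if b k then (1/2:ℝ) else -(1/2) := by
      intro k
      by_cases h : v k = 1/2
      · simp [hb, h]
      · rcases h1 k with h' | h'
        · exact absurd h' h
        · rw [h']; norm_num [hb]; exact h
    have hfil : (Finset.univ.filter (fun i => b i)) =
        (Finset.univ.filter (fun i => v i = 1/2)) := by
      apply Finset.filter_congr
      intro k _
      simp only [hb]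
      split_ifs with h
      · simp [h]
      · simpa using h
    have hok : ok (.inr b) := by
      show _ % 2 = 0
      rw [hfil]
      have hsx : ∀ i, v i ∈ ({1 / 2, -1 / 2} : Set ℝ) := by
        intro i
        rcases h1 i with h | h <;> rw [h] <;> simp <;> norm_num
      have hs := half_sum v hsx Finset.univ
      rw [h2] at hs
      set t := (Finset.univ.filter (fun i => v i = 1/2)).card with ht
      have : (t : ℝ) = 2 * m + 4 := by
        simp only [Finset.card_univ, Fintype.card_fin] at hs
        push_cast at hs ⊢
        linarith
      have ht2 : (t : ℤ) = 2 * m + 4 := by exact_mod_cast this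
      omega
    refine ⟨.inr b, Finset.mem_filter.mpr ⟨Finset.mem_univ _, hok⟩, ?_⟩
    funext k
    rw [vec_inr, ← hbv]

lemma vec_ne_zero_iff (p : Fin 8 × Fin 8 × Bool × Bool) (hp : p.1 < p.2.1) (k : Fin 8) :
    _root_.vec (.inl p) k ≠ 0 ↔ (k = p.1 ∨ k = p.2.1) := by
  obtain ⟨i, j, s, t⟩ := p
  have hij : i ≠ j := ne_of_lt hp
  rw [vec_inl]
  by_cases h1 : k = i <;> by_cases h2 : k = j <;> cases s <;> cases t <;>
    simp [h1, h2, hij, Ne.symm hij] <;> first | norm_num | (exact fun h => hij (h1 ▸ h2 ▸ rfl))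

lemma vec_injOn : Set.InjOn _root_.vec ↑KF := by
  rintro c hc c' hc' h
  simp only [Finset.coe_filter, KF, Set.mem_setOf_eq, Finset.mem_univ, true_and,
    Finset.mem_coe, Finset.mem_filter] at hc hc'
  cases c with
  | inl p =>
    cases c' with
    | inl q =>
      obtain ⟨i, j, s, t⟩ := p
      obtain ⟨i', j', s', t'⟩ := q
      have hp : i < j := hc
      have hq : i' < j' := hc'
      have hsupp : ∀ k, (k = i ∨ k = j) ↔ (k = i' ∨ k = j') := by
        intro k
        rw [← vec_ne_zero_iff (i, j, s, t) hp k, ← vec_ne_zero_iff (i', j', s', t') hq k, h]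
      have e1 := (hsupp i).mp (Or.inl rfl)
      have e2 := (hsupp j).mp (Or.inr rfl)
      have e3 := (hsupp i').mpr (Or.inl rfl)
      have e4 := (hsupp j').mpr (Or.inr rfl)
      have hii : i = i' ∧ j = j' := by
        have v1 := e1.imp (congrArg Fin.val) (congrArg Fin.val)
        have v2 := e2.imp (congrArg Fin.val) (congrArg Fin.val)
        have v3 := e3.imp (congrArg Fin.val) (congrArg Fin.val)
        have v4 := e4.imp (congrArg Fin.val) (congrArg Fin.val)
        have o1 : i.val < j.val := hp
        have o2 : i'.val < j'.val := hq
        constructor <;> apply Fin.val_injective <;> omega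
      obtain ⟨rfl, rfl⟩ := hii
      have hvi := congrFun h i
      have hvj := congrFun h j
      rw [vec_inl, vec_inl] at hvi hvj
      simp only [if_pos rfl, if_neg (ne_of_lt hp), if_neg (ne_of_gt hp), add_zero, zero_add]
        at hvi hvj
      have hs : s = s' := by cases s <;> cases s' <;> revert hvi <;> norm_num
      have ht : t = t' := by cases t <;> cases t' <;> revert hvj <;> norm_num
      rw [hs, ht]
    | inr b =>
      exfalso
      obtain ⟨i, j, s, t⟩ := p
      have hp : i < j := hc
      have hvi := congrFun h i
      rw [vec_inl, vec_inr] at hvi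
      rw [if_pos rfl, if_neg (ne_of_lt hp), add_zero] at hvi
      cases s <;> cases hbi : b i <;> rw [hbi] at hvi <;> norm_num at hvi
  | inr b =>
    cases c' with
    | inl q =>
      exfalso
      obtain ⟨i, j, s, t⟩ := q
      have hq : i < j := hc'
      have hvi := congrFun h i
      rw [vec_inl, vec_inr] at hvi
      rw [if_pos rfl, if_neg (ne_of_lt hq), add_zero] at hvi
      cases s <;> cases hbi : b i <;> rw [hbi] at hvi <;> norm_num at hvi
    | inr b' =>
      congr 1
      funext k
      have hk := congrFun h k
      rw [vec_inr, vec_inr] at hk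
      cases h1 : b k <;> cases h2 : b' k <;> rw [h1, h2] at hk <;> first | rfl | norm_num at hk

set_option maxRecDepth 1000000 in
set_option maxHeartbeats 4000000 in
theorem sumZ : ∀ i j : Fin 8, (∑ c ∈ KF, vZ c i * vZ c j) = if i = j then 240 else 0 := by
  decide

lemma dot_expand_sub (x y : Fin 8 → ℝ) :
    ∑ i, (x i - y i)^2 = x ⬝ᵥ x - 2 * (x ⬝ᵥ y) + y ⬝ᵥ y := by
  simp only [dotProduct, Finset.mul_sum, ← Finset.sum_add_distrib, ← Finset.sum_sub_distrib]
  exact Finset.sum_congr rfl fun i _ => by ring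

lemma dot_expand_add (x y : Fin 8 → ℝ) :
    ∑ i, (x i + y i)^2 = x ⬝ᵥ x + 2 * (x ⬝ᵥ y) + y ⬝ᵥ y := by
  simp only [dotProduct, Finset.mul_sum, ← Finset.sum_add_distrib]
  exact Finset.sum_congr rfl fun i _ => by ring

theorem E8_positive_roots_signed_graph
    (Pos : Set (Fin 8 → ℝ))
    (hPosRoot : ∀ v ∈ Pos, IsE8Root v)
    (hPosChoice : ∀ v, IsE8Root v → (v ∈ Pos ↔ ¬ (-v ∈ Pos)))
    (hPosClosed : ∀ x ∈ Pos, ∀ y ∈ Pos, IsE8Root (x + y) → x + y ∈ Pos)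
    (N : Matrix (Fin 8) (Fin 120) ℝ)
    (hNinj : Function.Injective (fun u : Fin 120 => (fun i => N i u)))
    (hNcols : Set.range (fun u : Fin 120 => (fun i => N i u)) = Pos)
    (A : Matrix (Fin 120) (Fin 120) ℝ)
    (hA : A = Nᵀ * N - 2 • (1 : Matrix (Fin 120) (Fin 120) ℝ)) :
    A.IsSymm ∧
    (∀ u, A u u = 0) ∧
    (∀ u v, A u v ∈ ({0, 1, -1} : Set ℝ)) ∧
    Module.finrank ℝ (Module.End.eigenspace (Matrix.toLin' A) 28) = 8 ∧
    Module.finrank ℝ (Module.End.eigenspace (Matrix.toLin' A) (-2)) = 112 := by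
  classical
  have hA' : A = Nᵀ * N - (2:ℝ) • (1 : Matrix (Fin 120) (Fin 120) ℝ) := by
    rw [hA]; congr 1; rw [← Nat.cast_smul_eq_nsmul ℝ]; norm_num
  set col : Fin 120 → (Fin 8 → ℝ) := fun u => (fun i => N i u) with hcol
  have hcolPos : ∀ u, col u ∈ Pos := fun u => hNcols ▸ Set.mem_range_self u
  have hcolRoot : ∀ u, IsE8Root (col u) := fun u => hPosRoot _ (hcolPos u)
  -- the Gram identity: N * Nᵀ = 30 • 1
  set PosF : Finset (Fin 8 → ℝ) := Finset.univ.image col with hPosF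
  have hmemPosF : ∀ v, v ∈ PosF ↔ v ∈ Pos := by
    intro v
    rw [hPosF, ← hNcols]
    simp [Finset.mem_image, Set.mem_range, hcol, eq_comm]
  set negPosF : Finset (Fin 8 → ℝ) := PosF.image (fun v => -v) with hnegPosF
  have hmemNeg : ∀ v, v ∈ negPosF ↔ -v ∈ Pos := by
    intro v
    rw [hnegPosF]
    simp only [Finset.mem_image]
    constructor
    · rintro ⟨w, hw, rfl⟩; rw [neg_neg]; exact (hmemPosF w).mp hw
    · intro h; exact ⟨-v, (hmemPosF _).mpr h, neg_neg v⟩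
  have hdisj : Disjoint PosF negPosF := by
    rw [Finset.disjoint_left]
    intro v hv hv'
    have hvPos := (hmemPosF v).mp hv
    have hnvPos := (hmemNeg v).mp hv'
    exact (hPosChoice v (hPosRoot v hvPos)).mp hvPos hnvPos
  have hR : KF.image _root_.vec = PosF ∪ negPosF := by
    apply Finset.Subset.antisymm
    · intro v hv
      obtain ⟨c, hc, rfl⟩ := Finset.mem_image.mp hv
      have hroot := isRoot_vec c hc
      rw [Finset.mem_union, hmemPosF, hmemNeg]
      by_cases h : _root_.vec c ∈ Pos
      · exact Or.inl h
      · right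
        by_contra h'
        exact h (((hPosChoice (_root_.vec c) hroot)).mpr h')
    · intro v hv
      rw [Finset.mem_union] at hv
      rcases hv with hv | hv
      · obtain ⟨c, hc, hceq⟩ := root_mem v (hPosRoot v ((hmemPosF v).mp hv))
        exact Finset.mem_image.mpr ⟨c, hc, hceq⟩
      · have : IsE8Root (-v) := hPosRoot _ ((hmemNeg v).mp hv)
        have : IsE8Root v := by simpa using isRoot_neg this
        obtain ⟨c, hc, hceq⟩ := root_mem v this
        exact Finset.mem_image.mpr ⟨c, hc, hceq⟩
  -- transfer of the coded sum
  have key : ∀ i j, (∑ u : Fin 120, N i u * N j u) = if i = j then (30:ℝ) else 0 := by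
    intro i j
    have hinj : ∀ x ∈ (Finset.univ : Finset (Fin 120)), ∀ y ∈ Finset.univ,
        col x = col y → x = y := fun x _ y _ h => hNinj h
    have h1 : ∑ v ∈ PosF, v i * v j = ∑ u : Fin 120, N i u * N j u := by
      rw [hPosF, Finset.sum_image hinj]
    have h2 : ∑ v ∈ negPosF, v i * v j = ∑ v ∈ PosF, v i * v j := by
      rw [hnegPosF, Finset.sum_image (fun x _ y _ h => neg_injective h)]
      exact Finset.sum_congr rfl fun v _ => by simp only [Pi.neg_apply]; ring
    have h3 : ∑ v ∈ KF.image _root_.vec, v i * v j =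
        ∑ c ∈ KF, _root_.vec c i * _root_.vec c j := by
      rw [Finset.sum_image (fun x hx y hy h => vec_injOn hx hy h)]
    have h4 : ∑ c ∈ KF, _root_.vec c i * _root_.vec c j = (1/4 : ℝ) * ((if i = j then (240:ℤ) else 0 : ℤ) : ℝ) := by
      rw [← sumZ i j]
      push_cast
      rw [Finset.mul_sum]
      exact Finset.sum_congr rfl fun c _ => by rw [_root_.vec, _root_.vec]; push_cast; ring
    have h5 : ∑ v ∈ KF.image _root_.vec, v i * v j =
        ∑ v ∈ PosF, v i * v j + ∑ v ∈ negPosF, v i * v j := by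
      rw [hR, Finset.sum_union hdisj]
    rw [h2, h3, h4] at h5
    have h6 : ∑ v ∈ PosF, v i * v j = if i = j then (30:ℝ) else 0 := by
      by_cases h : i = j <;> simp only [h, if_true, if_false] at h5 ⊢ <;>
        push_cast at h5 <;> linarith
    rw [← h6, h1]
  have NNT : N * Nᵀ = (30:ℝ) • (1 : Matrix (Fin 8) (Fin 8) ℝ) := by
    ext i j
    rw [Matrix.mul_apply]
    simp only [Matrix.transpose_apply, Matrix.smul_apply, Matrix.one_apply, smul_eq_mul]
    rw [key i j]
    by_cases h : i = j <;> simp [h]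
  -- dot products of columns
  have hdotAB : ∀ u v, (Nᵀ * N) u v = col u ⬝ᵥ col v := by
    intro u v
    rw [Matrix.mul_apply]
    simp only [Matrix.transpose_apply, dotProduct, hcol]
  -- Part 1
  have part1 : A.IsSymm := by
    rw [hA', Matrix.IsSymm, Matrix.transpose_sub, Matrix.transpose_mul, Matrix.transpose_transpose,
      Matrix.transpose_smul, Matrix.transpose_one]
  -- Part 2
  have part2 : ∀ u, A u u = 0 := by
    intro u
    rw [hA', Matrix.sub_apply, hdotAB, root_norm (hcolRoot u), Matrix.smul_apply,
      Matrix.one_apply_eq, smul_eq_mul]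
    norm_num
  -- Part 3
  have part3 : ∀ u v, A u v ∈ ({0, 1, -1} : Set ℝ) := by
    intro u v
    by_cases huv : u = v
    · subst huv; rw [part2]; simp
    · have hAval : A u v = col u ⬝ᵥ col v := by
        rw [hA', Matrix.sub_apply, hdotAB, Matrix.smul_apply, Matrix.one_apply_ne huv,
          smul_zero, sub_zero]
      set x := col u
      set y := col v
      have hxr := hcolRoot u
      have hyr := hcolRoot v
      obtain ⟨k, hk⟩ := root_dot_int hxr hyr
      have hxx : x ⬝ᵥ x = 2 := root_norm hxr
      have hyy : y ⬝ᵥ y = 2 := root_norm hyr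
      have hub : x ⬝ᵥ y ≤ 2 := by
        have h0 : (0:ℝ) ≤ ∑ i, (x i - y i)^2 := Finset.sum_nonneg fun i _ => sq_nonneg _
        rw [dot_expand_sub, hxx, hyy] at h0
        linarith
      have hlb : -2 ≤ x ⬝ᵥ y := by
        have h0 : (0:ℝ) ≤ ∑ i, (x i + y i)^2 := Finset.sum_nonneg fun i _ => sq_nonneg _
        rw [dot_expand_add, hxx, hyy] at h0
        linarith
      have hne2 : x ⬝ᵥ y ≠ 2 := by
        intro h
        have h0 : ∑ i, (x i - y i)^2 = 0 := by
          rw [dot_expand_sub, hxx, hyy, h]; ring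
        have : ∀ i ∈ Finset.univ, (x i - y i)^2 = 0 :=
          (Finset.sum_eq_zero_iff_of_nonneg (fun i _ => sq_nonneg _)).mp h0
        have hxy : x = y := by
          funext i
          have := this i (Finset.mem_univ i)
          have := pow_eq_zero_iff (n := 2) (by norm_num) |>.mp this
          linarith [this]
        exact huv (hNinj hxy)
      have hnem2 : x ⬝ᵥ y ≠ -2 := by
        intro h
        have h0 : ∑ i, (x i + y i)^2 = 0 := by
          rw [dot_expand_add, hxx, hyy, h]; ring
        have : ∀ i ∈ Finset.univ, (x i + y i)^2 = 0 :=
          (Finset.sum_eq_zero_iff_of_nonneg (fun i _ => sq_nonneg _)).mp h0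
        have hxy : -x = y := by
          funext i
          have := this i (Finset.mem_univ i)
          have := pow_eq_zero_iff (n := 2) (by norm_num) |>.mp this
          simp only [Pi.neg_apply]
          linarith [this]
        have : -x ∈ Pos := hxy ▸ hcolPos v
        exact (hPosChoice x hxr).mp (hcolPos u) this
      rw [hk] at hub hlb hne2 hnem2
      rw [hAval, hk]
      have hk2 : k ≤ 2 := by exact_mod_cast hub
      have hkm2 : -2 ≤ k := by exact_mod_cast hlb
      have hkne : k ≠ 2 := fun h => hne2 (by rw [h]; norm_num)
      have hknem : k ≠ -2 := fun h => hnem2 (by rw [h]; push_cast; norm_num)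
      interval_cases k
      · exact absurd rfl hknem
      · norm_num
      · norm_num
      · norm_num
      · exact absurd rfl hkne
  -- the two eigenspaces
  have mulVec_A : ∀ x : Fin 120 → ℝ, A *ᵥ x = (Nᵀ * N) *ᵥ x - (2:ℝ) • x := by
    intro x
    rw [hA', Matrix.sub_mulVec, Matrix.smul_mulVec, Matrix.one_mulVec]
  have hNtN : ∀ x : Fin 120 → ℝ, (Nᵀ * N) *ᵥ x = Nᵀ *ᵥ (N *ᵥ x) :=
    fun x => (Matrix.mulVec_mulVec x Nᵀ N).symm
  have hEigNeg2 : Module.End.eigenspace (Matrix.toLin' A) (-2) =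
      LinearMap.ker (Matrix.mulVecLin N) := by
    ext x
    rw [Module.End.mem_eigenspace_iff, LinearMap.mem_ker, Matrix.toLin'_apply,
      Matrix.mulVecLin_apply]
    constructor
    · intro hx
      rw [mulVec_A] at hx
      have h0 : (Nᵀ * N) *ᵥ x = 0 := by
        have : (Nᵀ * N) *ᵥ x = (-2:ℝ) • x + (2:ℝ) • x := by
          rw [← hx]; abel
        rw [this, ← add_smul]
        norm_num
      have h1 : (N *ᵥ x) ⬝ᵥ (N *ᵥ x) = 0 := by
        have : x ⬝ᵥ ((Nᵀ * N) *ᵥ x) = (N *ᵥ x) ⬝ᵥ (N *ᵥ x) := by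
          rw [hNtN, Matrix.dotProduct_mulVec, Matrix.vecMul_transpose]
        rw [← this, h0, dotProduct_zero]
      exact dotProduct_self_eq_zero.mp h1
    · intro hx
      rw [mulVec_A, hNtN, hx, Matrix.mulVec_zero, zero_sub, ← neg_smul]
      try norm_num
  have hkerdim : Module.finrank ℝ (LinearMap.ker (Matrix.mulVecLin N)) = 112 := by
    have hrn := LinearMap.finrank_range_add_finrank_ker (Matrix.mulVecLin N)
    have hfr : Module.finrank ℝ (Fin 120 → ℝ) = 120 := by
      simp [Module.finrank_pi]
    rw [hfr] at hrn
    have hrank : N.rank = 8 := by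
      have hle : N.rank ≤ 8 := by
        have := N.rank_le_card_height
        simpa using this
      have hge : 8 ≤ N.rank := by
        have h1 : (N * Nᵀ).rank ≤ N.rank := Matrix.rank_mul_le_left N Nᵀ
        have h2 : (N * Nᵀ).rank = 8 := by
          rw [NNT, Matrix.smul_one_eq_diagonal, Matrix.rank_diagonal,
            Fintype.card_congr (Equiv.subtypeUnivEquiv (fun i => by norm_num))]
          simp
        omega
      omega
    have : Module.finrank ℝ (LinearMap.range (Matrix.mulVecLin N)) = 8 := hrank
    omega
  have part5 : Module.finrank ℝ (Module.End.eigenspace (Matrix.toLin' A) (-2)) = 112 := by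
    rw [hEigNeg2]; exact hkerdim
  have part4 : Module.finrank ℝ (Module.End.eigenspace (Matrix.toLin' A) 28) = 8 := by
    have hEig28 : Module.End.eigenspace (Matrix.toLin' A) 28 =
        LinearMap.ker (Matrix.mulVecLin (Nᵀ * N - (30:ℝ) • 1)) := by
      ext x
      rw [Module.End.mem_eigenspace_iff, LinearMap.mem_ker, Matrix.toLin'_apply,
        Matrix.mulVecLin_apply, Matrix.sub_mulVec, Matrix.smul_mulVec, Matrix.one_mulVec,
        mulVec_A, sub_eq_zero]
      constructor
      · intro hx
        have : (Nᵀ * N) *ᵥ x = (28:ℝ) • x + (2:ℝ) • x := by rw [← hx]; abel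
        rw [this, ← add_smul]
        norm_num
      · intro hx
        rw [hx, ← sub_smul]
        norm_num
    rw [hEig28]
    set E := LinearMap.ker (Matrix.mulVecLin (Nᵀ * N - (30:ℝ) • 1)) with hE
    set Kk := LinearMap.ker (Matrix.mulVecLin N) with hKk
    have hrange : LinearMap.range (Matrix.mulVecLin Nᵀ) ≤ E := by
      rintro _ ⟨y, rfl⟩
      refine LinearMap.mem_ker.mpr ?_
      show (Nᵀ * N - (30:ℝ) • 1) *ᵥ (Nᵀ *ᵥ y) = 0
      have h1 : (Nᵀ * N) *ᵥ (Nᵀ *ᵥ y) = Nᵀ *ᵥ ((N * Nᵀ) *ᵥ y) := by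
        rw [Matrix.mulVec_mulVec, Matrix.mulVec_mulVec, Matrix.mul_assoc]
      rw [Matrix.sub_mulVec, Matrix.smul_mulVec, Matrix.one_mulVec, h1, NNT,
        Matrix.smul_mulVec, Matrix.one_mulVec, Matrix.mulVec_smul, sub_self]
    have hlow : 8 ≤ Module.finrank ℝ E := by
      have h1 : Module.finrank ℝ (LinearMap.range (Matrix.mulVecLin Nᵀ)) = 8 := by
        have : Nᵀ.rank = N.rank := N.rank_transpose
        have hrank : N.rank = 8 := by
          have hle : N.rank ≤ 8 := by simpa using N.rank_le_card_height
          have hge : 8 ≤ N.rank := by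
            have h1 : (N * Nᵀ).rank ≤ N.rank := Matrix.rank_mul_le_left N Nᵀ
            have h2 : (N * Nᵀ).rank = 8 := by
              rw [NNT, Matrix.smul_one_eq_diagonal, Matrix.rank_diagonal,
                Fintype.card_congr (Equiv.subtypeUnivEquiv (fun i => by norm_num))]
              simp
            omega
          omega
        show Module.finrank ℝ (LinearMap.range (Matrix.mulVecLin Nᵀ)) = 8
        rw [show Module.finrank ℝ (LinearMap.range (Matrix.mulVecLin Nᵀ)) = Nᵀ.rank from rfl]
        omega
      calc (8:ℕ) = Module.finrank ℝ (LinearMap.range (Matrix.mulVecLin Nᵀ)) := h1.symm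
        _ ≤ Module.finrank ℝ E := Submodule.finrank_mono hrange
    have hinf : E ⊓ Kk = ⊥ := by
      rw [eq_bot_iff]
      rintro x ⟨hxE, hxK⟩
      have hxE' : (Nᵀ * N - (30:ℝ) • 1) *ᵥ x = 0 := LinearMap.mem_ker.mp hxE
      have hxK' : N *ᵥ x = 0 := LinearMap.mem_ker.mp hxK
      rw [Matrix.sub_mulVec, Matrix.smul_mulVec, Matrix.one_mulVec, sub_eq_zero, hNtN,
        hxK', Matrix.mulVec_zero] at hxE'
      have : x = 0 := by
        have h30 : (30:ℝ) • x = 0 := hxE'.symm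
        funext i
        have := congrFun h30 i
        simp only [Pi.smul_apply, smul_eq_mul, Pi.zero_apply] at this ⊢
        linarith
      simp [this]
    have hup : Module.finrank ℝ E ≤ 8 := by
      have hsum := Submodule.finrank_sup_add_finrank_inf_eq E Kk
      rw [hinf, finrank_bot] at hsum
      have hker : Module.finrank ℝ Kk = 112 := hkerdim
      have hle : Module.finrank ℝ ↥(E ⊔ Kk) ≤ 120 := by
        have := Submodule.finrank_le (E ⊔ Kk)
        rwa [Module.finrank_pi, Fintype.card_fin] at this
      omega
    omega
  exact ⟨part1, part2, part3, part4, part5⟩
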